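/- arXiv:1707.06845 — 2 statements merged into one kernel-verified Lean document; each statement's English description precedes it below -/
import Mathlib

section
/- Let X and Y be random variables on (Ω,𝓕,P) that are comonotone, i.e., (X(ω) − X(ω'))·(Y(ω) − Y(ω')) ≥ 0 for all ω, ω' ∈ Ω. Then F^←_{X+Y}(u) = F^←_X(u) + F^←_Y(u) for every u ∈ (0,1). -/
open MeasureTheory

/-- The distribution function `F_X(x) = P[X ≤ x]` of a random variable `X`. -/
noncomputable def distFun {Ω : Type*} [MeasurableSpace Ω] (P : Measure Ω) (X : Ω → ℝ) (x : ℝ) : ℝ :=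
  (P {ω | X ω ≤ x}).toReal

/-- The (lower) quantile function `F^←_X(u) = inf {x | F_X(x) ≥ u}`. -/
noncomputable def quantile {Ω : Type*} [MeasurableSpace Ω] (P : Measure Ω) (X : Ω → ℝ) (u : ℝ) : ℝ :=
  sInf {x : ℝ | u ≤ distFun P X x}

section Aux

variable {Ω : Type*} [MeasurableSpace Ω] (P : Measure Ω) [IsProbabilityMeasure P]

lemma distFun_mono (X : Ω → ℝ) : Monotone (distFun P X) := fun a b hab =>
  ENNReal.toReal_mono (measure_ne_top _ _)
    (measure_mono (fun ω (h : X ω ≤ a) => h.trans hab))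

lemma distFun_le (X : Ω → ℝ) {A : Set Ω} {x : ℝ} (h : A ⊆ {ω | X ω ≤ x}) :
    (P A).toReal ≤ distFun P X x :=
  ENNReal.toReal_mono (measure_ne_top _ _) (measure_mono h)

lemma exists_distFun_ge (X : Ω → ℝ) {u : ℝ} (hu : u < 1) :
    ∃ x : ℝ, u ≤ distFun P X x := by
  have hm : Monotone (fun n : ℕ => {ω | X ω ≤ (n : ℝ)}) := by
    intro a b hab ω (h : X ω ≤ (a : ℝ))
    exact h.trans (by exact_mod_cast hab)
  have hU : (⋃ n : ℕ, {ω | X ω ≤ (n : ℝ)}) = Set.univ := by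
    ext ω
    simp only [Set.mem_iUnion, Set.mem_univ, iff_true]
    obtain ⟨n, hn⟩ := exists_nat_ge (X ω)
    exact ⟨n, hn⟩
  have ht := tendsto_measure_iUnion_atTop (μ := P) hm
  rw [hU, measure_univ] at ht
  have ht' : Filter.Tendsto (fun n : ℕ => distFun P X n) Filter.atTop (nhds 1) := by
    have := (ENNReal.tendsto_toReal (by norm_num : (1 : ENNReal) ≠ ⊤)).comp ht
    simpa [distFun, Function.comp_def] using this
  obtain ⟨n, hn⟩ := (ht'.eventually (eventually_gt_nhds hu)).exists
  exact ⟨n, hn.le⟩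

lemma exists_distFun_lt (X : Ω → ℝ) (hX : Measurable X) {u : ℝ} (hu : 0 < u) :
    ∃ x : ℝ, distFun P X x < u := by
  have hm : Antitone (fun n : ℕ => {ω | X ω ≤ -(n : ℝ)}) := by
    intro a b hab ω (h : X ω ≤ -(b : ℝ))
    exact h.trans (by simp; exact_mod_cast hab)
  have hI : (⋂ n : ℕ, {ω | X ω ≤ -(n : ℝ)}) = ∅ := by
    ext ω
    simp only [Set.mem_iInter, Set.mem_empty_iff_false, iff_false, not_forall]
    obtain ⟨n, hn⟩ := exists_nat_gt (-(X ω))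
    exact ⟨n, by simp only [Set.mem_setOf_eq]; push_neg; linarith⟩
  have ht := tendsto_measure_iInter_atTop (μ := P)
    (fun n : ℕ => ((hX measurableSet_Iic).nullMeasurableSet :
      NullMeasurableSet {ω | X ω ≤ -(n : ℝ)} P)) hm ⟨0, measure_ne_top _ _⟩
  have hI' : (⋂ n : ℕ, X ⁻¹' Set.Iic (-(n : ℝ))) = ∅ := hI
  rw [hI', measure_empty] at ht
  have ht' : Filter.Tendsto (fun n : ℕ => distFun P X (-(n : ℝ))) Filter.atTop (nhds 0) := by
    have := (ENNReal.tendsto_toReal (by norm_num : (0 : ENNReal) ≠ ⊤)).comp ht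
    simpa [distFun, Function.comp_def, Set.preimage, Set.mem_Iic] using this
  obtain ⟨n, hn⟩ := (ht'.eventually (eventually_lt_nhds hu)).exists
  exact ⟨-(n : ℝ), hn⟩

lemma bddBelow_quantileSet (X : Ω → ℝ) (hX : Measurable X) {u : ℝ} (hu : 0 < u) :
    BddBelow {x : ℝ | u ≤ distFun P X x} := by
  obtain ⟨x0, hx0⟩ := exists_distFun_lt P X hX hu
  refine ⟨x0, fun x hx => ?_⟩
  by_contra h
  push_neg at h
  exact absurd (hx.trans (distFun_mono P X h.le)) (not_le.2 hx0)

end Aux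

/-- If `X` and `Y` are comonotone random variables, then
`F^←_{X+Y}(u) = F^←_X(u) + F^←_Y(u)` for every `u ∈ (0,1)`. -/
theorem quantile_add_of_comonotone {Ω : Type*} [MeasurableSpace Ω] (P : Measure Ω)
    [IsProbabilityMeasure P] (X Y : Ω → ℝ) (hX : Measurable X) (hY : Measurable Y)
    (hcom : ∀ ω ω' : Ω, 0 ≤ (X ω - X ω') * (Y ω - Y ω')) :
    ∀ u ∈ Set.Ioo (0:ℝ) 1,
      quantile P (fun ω => X ω + Y ω) u = quantile P X u + quantile P Y u := by
  intro u hu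
  obtain ⟨hu0, hu1⟩ := hu
  set S : Ω → ℝ := fun ω => X ω + Y ω with hSdef
  have hSm : Measurable S := hX.add hY
  have hXne : {x : ℝ | u ≤ distFun P X x}.Nonempty := exists_distFun_ge P X hu1
  have hYne : {x : ℝ | u ≤ distFun P Y x}.Nonempty := exists_distFun_ge P Y hu1
  have hSne : {x : ℝ | u ≤ distFun P S x}.Nonempty := exists_distFun_ge P S hu1
  have hXbdd := bddBelow_quantileSet P X hX hu0
  have hYbdd := bddBelow_quantileSet P Y hY hu0
  have hSbdd := bddBelow_quantileSet P S hSm hu0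
  -- nestedness of level sets
  have nested : ∀ x y : ℝ, {ω | X ω ≤ x} ⊆ {ω | Y ω ≤ y} ∨ {ω | Y ω ≤ y} ⊆ {ω | X ω ≤ x} := by
    intro x y
    by_contra h
    rw [not_or] at h
    obtain ⟨h1, h2⟩ := h
    obtain ⟨ω, hω1, hω2⟩ := Set.not_subset.1 h1
    obtain ⟨ω', hω'1, hω'2⟩ := Set.not_subset.1 h2
    simp only [Set.mem_setOf_eq, not_le] at hω1 hω2 hω'1 hω'2
    nlinarith [hcom ω ω']
  apply le_antisymm
  · -- quantile S ≤ quantile X + quantile Y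
    have key : ∀ x ∈ {x : ℝ | u ≤ distFun P X x}, ∀ y ∈ {y : ℝ | u ≤ distFun P Y y},
        quantile P S u ≤ x + y := by
      intro x hx y hy
      have hmem : u ≤ distFun P S (x + y) := by
        rcases nested x y with h | h
        · refine hx.trans ?_
          refine ENNReal.toReal_mono (measure_ne_top _ _) (measure_mono fun ω hω => ?_)
          have := h hω
          simp only [Set.mem_setOf_eq] at this hω ⊢
          show X ω + Y ω ≤ x + y
          linarith
        · refine hy.trans ?_
          refine ENNReal.toReal_mono (measure_ne_top _ _) (measure_mono fun ω hω => ?_)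
          have := h hω
          simp only [Set.mem_setOf_eq] at this hω ⊢
          show X ω + Y ω ≤ x + y
          linarith
      exact csInf_le hSbdd hmem
    have h1 : ∀ y ∈ {y : ℝ | u ≤ distFun P Y y}, quantile P S u - y ≤ quantile P X u :=
      fun y hy => le_csInf hXne fun x hx => by linarith [key x hx y hy]
    have h2 : quantile P S u - quantile P X u ≤ quantile P Y u :=
      le_csInf hYne fun y hy => by linarith [h1 y hy]
    linarith
  · -- quantile X + quantile Y ≤ quantile S
    refine le_csInf hSne fun s hs => ?_
    simp only [Set.mem_setOf_eq] at hs
    set A : Set Ω := {ω | S ω ≤ s} with hAdef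
    have hAne : A.Nonempty := by
      by_contra h
      rw [Set.not_nonempty_iff_eq_empty] at h
      have : distFun P S s = 0 := by simp [distFun, hAdef] at h ⊢; simp [h]
      linarith
    obtain ⟨ω0, hω0⟩ := hAne
    have hb : ∀ ω ∈ A, ∀ ω' ∈ A, X ω + Y ω' ≤ s := by
      intro ω hω ω' hω'
      simp only [hAdef, Set.mem_setOf_eq, hSdef] at hω hω'
      rcases le_or_gt (X ω) (X ω') with h | h
      · linarith
      · have : Y ω' ≤ Y ω := by nlinarith [hcom ω ω']
        linarith
    have hXA : BddAbove (X '' A) := by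
      refine ⟨s - Y ω0, ?_⟩
      rintro a ⟨ω, hω, rfl⟩
      have := hb ω hω ω0 hω0
      linarith
    have hYA : BddAbove (Y '' A) := by
      refine ⟨s - X ω0, ?_⟩
      rintro a ⟨ω, hω, rfl⟩
      have := hb ω0 hω0 ω hω
      linarith
    set xs := sSup (X '' A) with hxs
    set ys := sSup (Y '' A) with hys
    have hAneX : (X '' A).Nonempty := ⟨X ω0, ω0, hω0, rfl⟩
    have hAneY : (Y '' A).Nonempty := ⟨Y ω0, ω0, hω0, rfl⟩
    have hsum : xs + ys ≤ s := by
      have h1 : xs ≤ s - ys := by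
        refine csSup_le hAneX ?_
        rintro a ⟨ω, hω, rfl⟩
        have h2 : ys ≤ s - X ω := by
          refine csSup_le hAneY ?_
          rintro b ⟨ω', hω', rfl⟩
          have := hb ω hω ω' hω'
          linarith
        linarith
      linarith
    have hux : u ≤ distFun P X xs := by
      refine hs.trans (distFun_le P X fun ω hω => ?_)
      exact le_csSup hXA ⟨ω, hω, rfl⟩
    have huy : u ≤ distFun P Y ys := by
      refine hs.trans (distFun_le P Y fun ω hω => ?_)
      exact le_csSup hYA ⟨ω, hω, rfl⟩
    have := csInf_le hXbdd hux
    have := csInf_le hYbdd huy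
    simp only [quantile] at *
    linarith
end

section
/- Assume there exists δ ∈ (0,1) such that D(u) = 0 for every u ∈ (0,δ). Then 𝓛_Q = {X | ∫_{(0,1)} |F^←_X(u)| dQ(u) < ∞}, and ϱ_Q is finite, i.e., ϱ_Q[X] ∈ ℝ for every X ∈ 𝓛_Q. -/
open MeasureTheory

/-- A distortion function: an increasing, right-continuous `D : [0,1] → [0,1]`
with `D 0 = 0` and `sup_{u ∈ (0,1)} D u = 1`. -/
structure IsDistortion (D : ℝ → ℝ) : Prop where
  mapsTo : ∀ u ∈ Set.Icc (0:ℝ) 1, D u ∈ Set.Icc (0:ℝ) 1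
  mono : ∀ ⦃a b : ℝ⦄, 0 ≤ a → a ≤ b → b ≤ 1 → D a ≤ D b
  rightCont : ∀ u ∈ Set.Ico (0:ℝ) 1, ContinuousWithinAt D (Set.Icc u 1) u
  zero : D 0 = 0
  sup_one : sSup (D '' Set.Ioo 0 1) = 1

/-- `Q` is the probability measure on the Borel sets of `(0,1)` corresponding to
the distortion function `D`, i.e. `Q (a,b] = D b - D a` for `0 < a ≤ b < 1`. -/
def IsCorresponding (D : ℝ → ℝ) (Q : Measure ℝ) : Prop :=
  IsProbabilityMeasure Q ∧ Q (Set.Ioo (0:ℝ) 1) = 1 ∧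
    ∀ a b : ℝ, 0 < a → a ≤ b → b < 1 → Q (Set.Ioc a b) = ENNReal.ofReal (D b - D a)

/-- `X ∈ 𝓛_Q`, i.e. `∫_{(0,1)} (F^←_X(u))⁺ dQ(u) < ∞`. -/
def memLQ {Ω : Type*} [MeasurableSpace Ω] (P : Measure Ω) (Q : Measure ℝ) (X : Ω → ℝ) : Prop :=
  ∫⁻ u in Set.Ioo (0:ℝ) 1, ENNReal.ofReal (max (quantile P X u) 0) ∂Q < ⊤

/-- The quantile risk measure
`ϱ_Q[X] = ∫_{(0,1)} (F^←_X(u))⁺ dQ(u) - ∫_{(0,1)} (F^←_X(u))⁻ dQ(u)`, with values in `EReal`. -/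
noncomputable def rho {Ω : Type*} [MeasurableSpace Ω] (P : Measure Ω) (Q : Measure ℝ)
    (X : Ω → ℝ) : EReal :=
  ((∫⁻ u in Set.Ioo (0:ℝ) 1, ENNReal.ofReal (max (quantile P X u) 0) ∂Q) : EReal)
    - ((∫⁻ u in Set.Ioo (0:ℝ) 1, ENNReal.ofReal (max (-(quantile P X u)) 0) ∂Q) : EReal)

open scoped ENNReal

section Aux

open Filter Topology

variable {Ω : Type*} [MeasurableSpace Ω] (P : Measure Ω) [IsProbabilityMeasure P]

private lemma distFun_mono_s7 (X : Ω → ℝ) {x y : ℝ} (h : x ≤ y) :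
    distFun P X x ≤ distFun P X y :=
  ENNReal.toReal_mono (measure_ne_top _ _) (measure_mono fun ω hω => le_trans hω h)

private lemma quantile_le_quantile (X : Ω → ℝ) (hX : Measurable X) {u v : ℝ}
    (hu : 0 < u) (hv : v < 1) (huv : u ≤ v) :
    quantile P X u ≤ quantile P X v := by
  apply csInf_le_csInf
  · obtain ⟨m, hm⟩ : ∃ m : ℕ, distFun P X (-(m:ℝ)) < u := by
      by_contra h
      push_neg at h
      have hmeas : ∀ m : ℕ, MeasurableSet {ω | X ω ≤ -(m:ℝ)} := fun m => hX measurableSet_Iic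
      have hanti : Antitone (fun m : ℕ => {ω | X ω ≤ -(m:ℝ)}) := by
        intro m n hmn ω hω
        simp only [Set.mem_setOf_eq] at hω ⊢
        have : (m:ℝ) ≤ (n:ℝ) := Nat.cast_le.2 hmn
        linarith
      have hempty : ⋂ m : ℕ, {ω | X ω ≤ -(m:ℝ)} = (∅ : Set Ω) := by
        ext ω
        simp only [Set.mem_iInter, Set.mem_setOf_eq, Set.mem_empty_iff_false, iff_false,
          not_forall, not_le]
        obtain ⟨m, hm⟩ := exists_nat_gt (-(X ω))
        exact ⟨m, by linarith⟩
      have htend := tendsto_measure_iInter_atTop (μ := P)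
        (s := fun m : ℕ => {ω | X ω ≤ -(m:ℝ)})
        (fun m => (hmeas m).nullMeasurableSet) hanti ⟨0, measure_ne_top _ _⟩
      rw [hempty, measure_empty] at htend
      have hle : ENNReal.ofReal u ≤ (0 : ℝ≥0∞) := by
        refine ge_of_tendsto' htend fun m => ?_
        exact (ENNReal.ofReal_le_iff_le_toReal (measure_ne_top _ _)).2 (h m)
      rw [nonpos_iff_eq_zero, ENNReal.ofReal_eq_zero] at hle
      linarith
    refine ⟨-(m:ℝ), fun x hx => ?_⟩
    by_contra h
    push_neg at h
    exact absurd hx (not_le.2 ((distFun_mono_s7 P X h.le).trans_lt hm))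
  · obtain ⟨m, hm⟩ : ∃ m : ℕ, v ≤ distFun P X (m:ℝ) := by
      by_contra h
      push_neg at h
      have hmono : Monotone (fun m : ℕ => {ω | X ω ≤ (m:ℝ)}) := by
        intro m n hmn ω hω
        simp only [Set.mem_setOf_eq] at hω ⊢
        have : (m:ℝ) ≤ (n:ℝ) := Nat.cast_le.2 hmn
        linarith
      have huniv : ⋃ m : ℕ, {ω | X ω ≤ (m:ℝ)} = (Set.univ : Set Ω) := by
        ext ω
        simp only [Set.mem_iUnion, Set.mem_setOf_eq, Set.mem_univ, iff_true]
        obtain ⟨m, hm⟩ := exists_nat_gt (X ω)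
        exact ⟨m, hm.le⟩
      have htend := tendsto_measure_iUnion_atTop (μ := P) hmono
      rw [huniv, measure_univ] at htend
      have hle : (1 : ℝ≥0∞) ≤ ENNReal.ofReal v := by
        refine le_of_tendsto' htend fun m => ?_
        exact (ENNReal.le_ofReal_iff_toReal_le (measure_ne_top _ _) (hu.le.trans huv)).2 (h m).le
      exact absurd hle (not_le.2 (ENNReal.ofReal_lt_one.2 hv))
    exact ⟨(m:ℝ), hm⟩
  · exact fun x hx => le_trans huv hx

end Aux

/-- If `D` vanishes on `(0,δ)` for some `δ ∈ (0,1)`, then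
`𝓛_Q = {X | ∫_{(0,1)} |F^←_X(u)| dQ(u) < ∞}` and `ϱ_Q` is finite on `𝓛_Q`. -/
theorem memLQ_iff_abs_and_rho_finite_of_vanishing {Ω : Type*} [MeasurableSpace Ω]
    (P : Measure Ω) [IsProbabilityMeasure P] (D : ℝ → ℝ) (Q : Measure ℝ)
    (hD : IsDistortion D) (hQ : IsCorresponding D Q)
    (δ : ℝ) (hδ : δ ∈ Set.Ioo (0:ℝ) 1) (hDzero : ∀ u ∈ Set.Ioo (0:ℝ) δ, D u = 0) :
    ∀ X : Ω → ℝ, Measurable X →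
      (memLQ P Q X ↔ ∫⁻ u in Set.Ioo (0:ℝ) 1, ENNReal.ofReal |quantile P X u| ∂Q < ⊤) ∧
      (memLQ P Q X → ∃ r : ℝ, rho P Q X = (r : EReal)) := by
  have key : ∀ X : Ω → ℝ, Measurable X →
      ((∫⁻ u in Set.Ioo (0:ℝ) 1, ENNReal.ofReal (max (quantile P X u) 0) ∂Q < ⊤) ↔
        ∫⁻ u in Set.Ioo (0:ℝ) 1, ENNReal.ofReal |quantile P X u| ∂Q < ⊤) ∧
      ((∫⁻ u in Set.Ioo (0:ℝ) 1, ENNReal.ofReal (max (quantile P X u) 0) ∂Q < ⊤) →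
        ∫⁻ u in Set.Ioo (0:ℝ) 1, ENNReal.ofReal (max (-(quantile P X u)) 0) ∂Q < ⊤) := by
    obtain ⟨hQP, hQ1, hQab⟩ := hQ
    obtain ⟨hδ0, hδ1⟩ := hδ
    set η := δ / 2 with hηdef
    have hη0 : 0 < η := by positivity
    have hηδ : η < δ := by simp only [hηdef]; linarith
    have hη1 : η < 1 := by linarith
    -- Q vanishes on (0, η)
    have hnull : Q (Set.Ioo 0 η) = 0 := by
      have hsub : Set.Ioo (0:ℝ) η ⊆ ⋃ n : ℕ, Set.Ioc (η / (n + 2)) η := by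
        intro x hx
        obtain ⟨n, hn⟩ := exists_nat_gt (η / x)
        refine Set.mem_iUnion.2 ⟨n, ?_, hx.2.le⟩
        rw [div_lt_iff₀ (by positivity)]
        have h1 : η / x < (n:ℝ) + 2 := by linarith
        have h2 : η < x * ((n:ℝ) + 2) := by
          rw [div_lt_iff₀ hx.1] at h1
          linarith [h1]
        linarith [h2]
      refine le_antisymm ?_ zero_le
      calc Q (Set.Ioo 0 η) ≤ Q (⋃ n : ℕ, Set.Ioc (η / (n + 2)) η) := measure_mono hsub
        _ ≤ ∑' n : ℕ, Q (Set.Ioc (η / (n + 2)) η) := measure_iUnion_le _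
        _ = 0 := by
          refine ENNReal.tsum_eq_zero.2 fun n => ?_
          have hpos : 0 < η / ((n:ℝ) + 2) := by positivity
          have hle : η / ((n:ℝ) + 2) ≤ η := by
            rw [div_le_iff₀ (by positivity)]
            nlinarith [hη0.le]
          rw [hQab _ _ hpos hle (by linarith),
            hDzero _ ⟨hη0, hηδ⟩, hDzero _ ⟨hpos, lt_of_le_of_lt hle hηδ⟩]
          simp
    -- a.e. equality of domains
    have hae : Set.Ioo (0:ℝ) 1 =ᵐ[Q] Set.Ico η 1 := by
      rw [MeasureTheory.ae_eq_set]
      constructor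
      · refine measure_mono_null (fun x hx => ?_) hnull
        obtain ⟨⟨hx0, hx1⟩, hx2⟩ := hx
        exact ⟨hx0, lt_of_not_ge fun h => hx2 ⟨h, hx1⟩⟩
      · refine measure_mono_null (fun x hx => ?_) (measure_empty (μ := Q))
        exact absurd ⟨lt_of_lt_of_le hη0 hx.1.1, hx.1.2⟩ hx.2
    intro X hX
    set q : ℝ → ℝ := quantile P X with hq
    set c : ℝ := max (-(q η)) 0 with hc
    have hc0 : 0 ≤ c := le_max_right _ _
    -- bound on negative part pointwise
    have hneg : ∀ u ∈ Set.Ico η 1, max (-(q u)) 0 ≤ c := by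
      intro u hu
      have := quantile_le_quantile P X hX hη0 hu.2 hu.1
      exact max_le_max (neg_le_neg this) le_rfl
    -- the negative-part integral is finite
    have hCint : ∫⁻ u in Set.Ioo (0:ℝ) 1, ENNReal.ofReal (max (-(q u)) 0) ∂Q
        ≤ ENNReal.ofReal c := by
      rw [setLIntegral_congr hae]
      calc ∫⁻ u in Set.Ico η 1, ENNReal.ofReal (max (-(q u)) 0) ∂Q
          ≤ ∫⁻ _ in Set.Ico η 1, ENNReal.ofReal c ∂Q := by
            refine lintegral_mono_ae (((ae_restrict_mem measurableSet_Ico).mono fun u hu => ?_))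
            exact ENNReal.ofReal_le_ofReal (hneg u hu)
        _ = ENNReal.ofReal c * Q (Set.Ico η 1) := setLIntegral_const _ _
        _ ≤ ENNReal.ofReal c * 1 := mul_le_mul_right prob_le_one _
        _ = ENNReal.ofReal c := mul_one _
    have hClt : ∫⁻ u in Set.Ioo (0:ℝ) 1, ENNReal.ofReal (max (-(q u)) 0) ∂Q < ⊤ :=
      lt_of_le_of_lt hCint ENNReal.ofReal_lt_top
    refine ⟨⟨fun hB => ?_, fun hA => ?_⟩, fun _ => hClt⟩
    · -- pos part finite → abs finite
      have habs : ∫⁻ u in Set.Ioo (0:ℝ) 1, ENNReal.ofReal |q u| ∂Q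
          ≤ (∫⁻ u in Set.Ioo (0:ℝ) 1, ENNReal.ofReal (max (q u) 0) ∂Q) + ENNReal.ofReal c := by
        rw [setLIntegral_congr hae, setLIntegral_congr (f := fun u => ENNReal.ofReal (max (q u) 0)) hae]
        calc ∫⁻ u in Set.Ico η 1, ENNReal.ofReal |q u| ∂Q
            ≤ ∫⁻ u in Set.Ico η 1, ENNReal.ofReal (max (q u) 0) + ENNReal.ofReal c ∂Q := by
              refine lintegral_mono_ae (((ae_restrict_mem measurableSet_Ico).mono fun u hu => ?_))
              have h1 : |q u| = max (q u) 0 + max (-(q u)) 0 := by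
                rcases le_total (q u) 0 with h | h
                · rw [abs_of_nonpos h, max_eq_right h, max_eq_left (by linarith)]; ring
                · rw [abs_of_nonneg h, max_eq_left h, max_eq_right (by linarith)]; ring
              have h2 : |q u| ≤ max (q u) 0 + c := by
                rw [h1]; exact add_le_add_right (hneg u hu) _
              calc ENNReal.ofReal |q u| ≤ ENNReal.ofReal (max (q u) 0 + c) :=
                  ENNReal.ofReal_le_ofReal h2
                _ = ENNReal.ofReal (max (q u) 0) + ENNReal.ofReal c :=
                  ENNReal.ofReal_add (le_max_right _ _) hc0
          _ = (∫⁻ u in Set.Ico η 1, ENNReal.ofReal (max (q u) 0) ∂Q)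
              + ∫⁻ _ in Set.Ico η 1, ENNReal.ofReal c ∂Q :=
              lintegral_add_right _ measurable_const
          _ ≤ (∫⁻ u in Set.Ico η 1, ENNReal.ofReal (max (q u) 0) ∂Q) + ENNReal.ofReal c := by
              gcongr
              rw [setLIntegral_const]
              calc ENNReal.ofReal c * Q (Set.Ico η 1) ≤ ENNReal.ofReal c * 1 :=
                  mul_le_mul_right prob_le_one _
                _ = ENNReal.ofReal c := mul_one _
      exact lt_of_le_of_lt habs (ENNReal.add_lt_top.2 ⟨hB, ENNReal.ofReal_lt_top⟩)
    · -- abs finite → pos part finite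
      refine lt_of_le_of_lt (lintegral_mono fun u => ?_) hA
      exact ENNReal.ofReal_le_ofReal (max_le (le_abs_self _) (abs_nonneg _))
  intro X hX
  obtain ⟨hiff, hnegfin⟩ := key X hX
  refine ⟨hiff, fun hmem => ?_⟩
  have hB : ∫⁻ u in Set.Ioo (0:ℝ) 1, ENNReal.ofReal (max (quantile P X u) 0) ∂Q < ⊤ := hmem
  have hC := hnegfin hB
  set B := ∫⁻ u in Set.Ioo (0:ℝ) 1, ENNReal.ofReal (max (quantile P X u) 0) ∂Q with hBdef
  set C := ∫⁻ u in Set.Ioo (0:ℝ) 1, ENNReal.ofReal (max (-(quantile P X u)) 0) ∂Q with hCdef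
  refine ⟨B.toReal - C.toReal, ?_⟩
  have hBE : ((B : ℝ≥0∞) : EReal) = ((B.toReal : ℝ) : EReal) := by
    conv_lhs => rw [← ENNReal.ofReal_toReal hB.ne]
    rw [EReal.coe_ennreal_ofReal, max_eq_left ENNReal.toReal_nonneg]
  have hCE : ((C : ℝ≥0∞) : EReal) = ((C.toReal : ℝ) : EReal) := by
    conv_lhs => rw [← ENNReal.ofReal_toReal hC.ne]
    rw [EReal.coe_ennreal_ofReal, max_eq_left ENNReal.toReal_nonneg]
  rw [rho, ← hBdef, ← hCdef, hBE, hCE, ← EReal.coe_sub]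
end
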